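/- A finite path of a threshold automaton is steady if and only if its endpoints have the same context: for every configuration σ and every schedule τ applicable to σ, all configurations visited by the path from σ along τ have the same context if and only if ω(σ) = ω(τ(σ)). -/

import Mathlib

/-!
Threshold automata (Konnov, Veith, Widder), following
"Complexity of Verification and Synthesis of Threshold Automata".
-/

/-- A threshold guard `x ⋈ a₀ + a₁·p₁ + … + a_{|Π|}·p_{|Π|}` over shared variables `V` and
parameters `P`.  `isRise = true` means a *rise* guard `x ≥ …`, and `isRise = false` means a
*fall* guard `x < …`. -/
structure TGuard (V P : Type) where
  var : V
  isRise : Bool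
  a0 : ℚ
  coef : P → ℚ

/-- A configuration `σ = (κ, g, p)`: numbers of processes in each location, values of the
shared variables, and values of the parameters. -/
structure Config (L V P : Type) where
  κ : L → ℕ
  g : V → ℕ
  p : P → ℕ

/-- A rule of a threshold automaton: source and target locations, a guard that is a
(finite) conjunction of threshold guards, and an update `V → {0,1}`. -/
structure TRule (L V P : Type) where
  src : L
  dst : L
  guard : List (TGuard V P)
  upd : V → ℕ
  upd_le_one : ∀ v, upd v ≤ 1

/-- A threshold automaton `(L, I, Γ, R)` together with its environment `(Π, RC, N)`.
`L`, `V`, `P` are the types of locations, shared variables and parameters, and `R` is the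
index type of rules. -/
structure TA (L V P R : Type) where
  initial : Set L
  initial_nonempty : initial.Nonempty
  rc : Set (P → ℕ)
  N : (P → ℕ) → ℕ
  rule : R → TRule L V P

variable {L V P R : Type}

/-- Satisfaction of a threshold guard by values `g` of the shared variables and `p` of the
parameters. -/
def TGuard.holds [Fintype P] (φ : TGuard V P) (g : V → ℕ) (p : P → ℕ) : Prop :=
  if φ.isRise then φ.a0 + ∑ i : P, φ.coef i * (p i : ℚ) ≤ (g φ.var : ℚ)
  else (g φ.var : ℚ) < φ.a0 + ∑ i : P, φ.coef i * (p i : ℚ)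

/-- A configuration enables a rule. -/
def TRule.enabledAt [Fintype P] (r : TRule L V P) (σ : Config L V P) : Prop :=
  0 < σ.κ r.src ∧ ∀ φ ∈ r.guard, φ.holds σ.g σ.p

/-- The result of firing a rule at a configuration. -/
def TRule.fire [DecidableEq L] (r : TRule L V P) (σ : Config L V P) : Config L V P where
  κ := fun ℓ => σ.κ ℓ + (if ℓ = r.dst then 1 else 0) - (if ℓ = r.src then 1 else 0)
  g := fun v => σ.g v + r.upd v
  p := σ.p

namespace TA

variable [Fintype P] [DecidableEq L]

/-- `σ` is a configuration of `ta`: the parameters satisfy the resilience condition and the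
total number of processes is `N(p)`. -/
def validConfig [Fintype L] (ta : TA L V P R) (σ : Config L V P) : Prop :=
  σ.p ∈ ta.rc ∧ ∑ ℓ : L, σ.κ ℓ = ta.N σ.p

/-- Initial configurations. -/
def isInitial [Fintype L] (ta : TA L V P R) (σ : Config L V P) : Prop :=
  ta.validConfig σ ∧ (∀ ℓ, ℓ ∉ ta.initial → σ.κ ℓ = 0) ∧ ∀ v, σ.g v = 0

/-- A schedule (finite sequence of rules) is applicable to a configuration. -/
def applicable (ta : TA L V P R) : Config L V P → List R → Prop
  | _, [] => True
  | σ, r :: τ => (ta.rule r).enabledAt σ ∧ ta.applicable ((ta.rule r).fire σ) τ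

/-- The configuration `τ(σ)` resulting from applying a schedule. -/
def apply (ta : TA L V P R) : Config L V P → List R → Config L V P
  | σ, [] => σ
  | σ, r :: τ => ta.apply ((ta.rule r).fire σ) τ

/-- The configurations visited by the path from `σ` along `τ` (including both endpoints). -/
def visited (ta : TA L V P R) : Config L V P → List R → List (Config L V P)
  | σ, [] => [σ]
  | σ, r :: τ => σ :: ta.visited ((ta.rule r).fire σ) τ

/-- Reachability `σ →* σ'`. -/
def reaches (ta : TA L V P R) (σ σ' : Config L V P) : Prop :=
  ∃ τ : List R, ta.applicable σ τ ∧ ta.apply σ τ = σ'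

/-- The set of all threshold guards occurring in rules of the automaton. -/
def guards (ta : TA L V P R) : Set (TGuard V P) :=
  {φ | ∃ r : R, φ ∈ (ta.rule r).guard}

/-- The context `ω(σ)`: rise guards of `ta` that are true in `σ` together with fall guards
of `ta` that are false in `σ`. -/
def context (ta : TA L V P R) (σ : Config L V P) : Set (TGuard V P) :=
  {φ | φ ∈ ta.guards ∧ if φ.isRise then φ.holds σ.g σ.p else ¬ φ.holds σ.g σ.p}

/-- A schedule applicable at `σ` is steady if all configurations visited by the
corresponding path have the same context. -/
def steady (ta : TA L V P R) (σ : Config L V P) (τ : List R) : Prop :=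
  ∀ σ' ∈ ta.visited σ τ, ta.context σ' = ta.context σ

end TA


section Helpers
variable [Fintype P] [DecidableEq L]

lemma context_mono (ta : TA L V P R) (σ σ' : Config L V P)
    (hp : σ'.p = σ.p) (hg : ∀ v, σ.g v ≤ σ'.g v) :
    ta.context σ ⊆ ta.context σ' := by
  intro φ hφ
  obtain ⟨hmem, h⟩ := hφ
  refine ⟨hmem, ?_⟩
  have hv : (σ.g φ.var : ℚ) ≤ (σ'.g φ.var : ℚ) := by exact_mod_cast hg φ.var
  cases hb : φ.isRise with
  | true =>
    simp only [hb, if_true] at h ⊢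
    unfold TGuard.holds at h ⊢
    simp only [hb, if_true] at h ⊢
    rw [hp]; exact le_trans h hv
  | false =>
    simp only [hb, if_false] at h ⊢
    unfold TGuard.holds at h ⊢
    simp only [hb] at h ⊢
    rw [hp]; intro hlt; exact h (lt_of_le_of_lt hv hlt)

lemma visited_bounds (ta : TA L V P R) (τ : List R) :
    ∀ (σ : Config L V P), ∀ σ' ∈ ta.visited σ τ,
      σ'.p = σ.p ∧ (∀ v, σ.g v ≤ σ'.g v) ∧
      (ta.apply σ τ).p = σ'.p ∧ (∀ v, σ'.g v ≤ (ta.apply σ τ).g v) := by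
  induction τ with
  | nil =>
    intro σ σ' hσ'
    simp [TA.visited] at hσ'
    subst hσ'
    exact ⟨rfl, fun v => le_rfl, rfl, fun v => le_rfl⟩
  | cons r τ ih =>
    intro σ σ' hσ'
    simp only [TA.visited, List.mem_cons] at hσ'
    rcases hσ' with rfl | h
    · refine ⟨rfl, fun v => le_rfl, ?_, ?_⟩
      · obtain ⟨hp, _, hp', _⟩ := ih ((ta.rule r).fire σ') ((ta.rule r).fire σ')
          (by cases τ <;> simp [TA.visited])
        simpa [TA.apply, TRule.fire] using hp'.trans hp
      · intro v
        obtain ⟨_, hg, _, hg'⟩ := ih ((ta.rule r).fire σ') ((ta.rule r).fire σ')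
          (by cases τ <;> simp [TA.visited])
        simp only [TA.apply]
        exact le_trans (Nat.le_add_right _ _) (hg' v)
    · obtain ⟨hp, hg, hp', hg'⟩ := ih ((ta.rule r).fire σ) σ' h
      refine ⟨by simpa [TRule.fire] using hp, fun v => ?_, by simpa [TA.apply] using hp',
        fun v => by simpa [TA.apply] using hg' v⟩
      exact le_trans (Nat.le_add_right _ _) (hg v)

lemma apply_mem_visited (ta : TA L V P R) (σ : Config L V P) (τ : List R) :
    ta.apply σ τ ∈ ta.visited σ τ := by
  induction τ generalizing σ with
  | nil => simp [TA.apply, TA.visited]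
  | cons r τ ih => simpa [TA.apply, TA.visited] using Or.inr (ih _)

end Helpers

/-- A finite path of a threshold automaton is steady if and only if its endpoints have the
same context: for every configuration `σ` and schedule `τ` applicable to `σ`, all
configurations visited by the path from `σ` along `τ` have the same context iff
`ω(σ) = ω(τ(σ))`. -/
theorem steady_iff_same_context_at_endpoints [Fintype P] [DecidableEq L]
    (ta : TA L V P R) (σ : Config L V P) (τ : List R)
    (happ : ta.applicable σ τ) :
    ta.steady σ τ ↔ ta.context σ = ta.context (ta.apply σ τ) := by
  constructor
  · intro hs
    exact (hs _ (apply_mem_visited ta σ τ)).symm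
  · intro hend σ' hσ'
    obtain ⟨hp, hg, hp', hg'⟩ := visited_bounds ta τ σ σ' hσ'
    have h1 : ta.context σ ⊆ ta.context σ' := context_mono ta σ σ' hp hg
    have h2 : ta.context σ' ⊆ ta.context (ta.apply σ τ) :=
      context_mono ta σ' (ta.apply σ τ) hp' hg'
    exact Set.Subset.antisymm (hend ▸ h2) h1
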